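/- Let (aᵢ) be a sequence in ℝ² with ‖aᵢ‖ → 0, and let (εᵢ) be signs produced blockwise so that the signed sum over the m-th block has norm at most 6/(m+1)². Then the full series ∑ εᵢ aᵢ is Cauchy, hence converges. -/

import Mathlib

open Filter

theorem stmt14 (a : ℕ → EuclideanSpace ℝ (Fin 2))
    (h : Tendsto (fun n => ‖a n‖) atTop (nhds 0))
    (M : ℕ → ℕ) (hM0 : M 0 = 0) (hMmono : StrictMono M)
    (hblock : ∀ m, ∀ i, M m ≤ i → i < M (m + 1) → ‖a i‖ < 1 / ((m : ℝ) + 1) ^ 2)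
    (ε : ℕ → ℝ) (hε : ∀ i, ε i = 1 ∨ ε i = -1)
    (hsum : ∀ m, ‖∑ i ∈ Finset.Ico (M m) (M (m + 1)), ε i • a i‖ ≤ 6 / ((m : ℝ) + 1) ^ 2)
    (hpartial : ∀ m, ∀ k, M m ≤ k → k ≤ M (m + 1) →
      ‖∑ i ∈ Finset.Ico (M m) k, ε i • a i‖ ≤ 7 / ((m : ℝ) + 1) ^ 2) :
    ∃ l, Tendsto (fun N => ∑ i ∈ Finset.range N, ε i • a i) atTop (nhds l) := by
  classical
  set b : ℕ → EuclideanSpace ℝ (Fin 2) :=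
    fun m => ∑ i ∈ Finset.Ico (M m) (M (m + 1)), ε i • a i with hb
  -- summability of the block sums
  have hg : Summable (fun m : ℕ => 6 / ((m : ℝ) + 1) ^ 2) := by
    have h1 : Summable (fun n : ℕ => 1 / ((n : ℝ)) ^ 2) :=
      Real.summable_one_div_nat_pow.mpr (by norm_num)
    have h2 : Summable (fun n : ℕ => 1 / ((n : ℝ) + 1) ^ 2) := by
      have := (summable_nat_add_iff 1).mpr h1
      simpa [Nat.cast_add] using this
    simpa [div_eq_mul_inv, mul_assoc] using h2.mul_left 6
  have hbs : Summable b := Summable.of_norm_bounded hg (fun m => hsum m)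
  set L := ∑' m, b m with hL
  have hT : Tendsto (fun k => ∑ j ∈ Finset.range k, b j) atTop (nhds L) :=
    hbs.hasSum.tendsto_sum_nat
  -- block sums telescope
  have hTS : ∀ k, ∑ j ∈ Finset.range k, b j = ∑ i ∈ Finset.range (M k), ε i • a i := by
    intro k
    induction k with
    | zero => simp [hM0]
    | succ k ih =>
      rw [Finset.sum_range_succ, ih, hb]
      simp only [Finset.range_eq_Ico]
      exact Finset.sum_Ico_consecutive _ (Nat.zero_le _)
        (le_of_lt (hMmono (Nat.lt_succ_self k)))
  -- block index of N
  set m : ℕ → ℕ := fun N => Nat.findGreatest (fun j => M j ≤ N) N with hm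
  have hm1 : ∀ N, M (m N) ≤ N := by
    intro N
    exact Nat.findGreatest_spec (P := fun j => M j ≤ N) (Nat.zero_le N) (show M 0 ≤ N by rw [hM0]; exact Nat.zero_le N)
  have hm2 : ∀ N, N < M (m N + 1) := by
    intro N
    by_contra hc
    push_neg at hc
    have h1 : m N + 1 ≤ N := le_trans (hMmono.id_le _) hc
    have h2 : m N + 1 ≤ m N :=
      Nat.le_findGreatest (P := fun j => M j ≤ N) h1 hc
    omega
  have hmtop : Tendsto m atTop atTop := by
    refine tendsto_atTop_atTop.2 fun c => ⟨M c, fun N hN => ?_⟩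
    exact Nat.le_findGreatest (le_trans (hMmono.id_le c) hN) hN
  -- error term
  have hdiff : ∀ N, (∑ i ∈ Finset.range N, ε i • a i) - ∑ j ∈ Finset.range (m N), b j
      = ∑ i ∈ Finset.Ico (M (m N)) N, ε i • a i := by
    intro N
    rw [hTS, Finset.sum_Ico_eq_sub _ (hm1 N)]
  have hrhs : Tendsto (fun N => 7 / ((m N : ℝ) + 1) ^ 2) atTop (nhds 0) := by
    have hbase : Tendsto (fun k : ℕ => 7 / ((k : ℝ) + 1) ^ 2) atTop (nhds 0) := by
      apply Tendsto.div_atTop (tendsto_const_nhds)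
      exact (tendsto_pow_atTop (two_ne_zero)).comp
        (tendsto_atTop_add_const_right atTop 1 tendsto_natCast_atTop_atTop)
    exact hbase.comp hmtop
  have herr : Tendsto (fun N => (∑ i ∈ Finset.range N, ε i • a i)
      - ∑ j ∈ Finset.range (m N), b j) atTop (nhds 0) := by
    apply squeeze_zero_norm _ hrhs
    intro N
    rw [hdiff N]
    exact hpartial (m N) N (hm1 N) (le_of_lt (hm2 N))
  refine ⟨L, ?_⟩
  have h1 : Tendsto (fun N => ∑ j ∈ Finset.range (m N), b j) atTop (nhds L) :=
    hT.comp hmtop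
  have := h1.add herr
  simpa using this
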